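/- Full Diophantine exclusion estimate: Under the assumptions of the single-resonance estimate, if τ > d, then the set of ξ ∈ Π for which the Diophantine condition |⟨k, ω(ξ)⟩| > γ/|k|^τ fails for some nonzero k ∈ ℤ^d has Lebesgue measure at most C'' · γ, where C'' depends only on C, d, τ, and the diameter of Π. Consequently, for small γ the Diophantine frequencies have nearly full measure in Π. -/

import Mathlib

open scoped BigOperators
open scoped ENNReal NNReal
open MeasureTheory

set_option maxHeartbeats 1000000


lemma aux_g_summable {p : ℝ} (hp : 1 < p) :
    Summable (fun m : ℤ => (max 1 |(m : ℝ)|) ^ (-p)) := by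
  have h := Real.summable_abs_int_rpow hp
  have : (fun m : ℤ => (max 1 |(m : ℝ)|) ^ (-p))
      = Function.update (fun m : ℤ => |(m : ℝ)| ^ (-p)) 0 1 := by
    ext m
    by_cases hm : m = 0
    · subst hm; simp
    · rw [Function.update_of_ne hm]
      have h1 : (1 : ℝ) ≤ |(m : ℝ)| := by
        have := Int.one_le_abs hm
        calc (1:ℝ) = ((1:ℤ):ℝ) := by norm_num
        _ ≤ ((|m| : ℤ) : ℝ) := by exact_mod_cast this
        _ = |(m:ℝ)| := by push_cast; ring
      rw [max_eq_right h1]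
  rw [this]
  exact h.update 0 1

lemma aux_prod_summable (n : ℕ) (g : ℤ → ℝ) (hg : ∀ m, 0 ≤ g m) (h : Summable g) :
    Summable (fun k : Fin n → ℤ => ∏ i, g (k i)) := by
  induction n with
  | zero => exact Summable.of_finite
  | succ n ih =>
      have hmul : Summable (fun x : ℤ × (Fin n → ℤ) => g x.1 * ∏ i, g (x.2 i)) :=
        Summable.mul_of_nonneg (f := g) (g := fun k : Fin n → ℤ => ∏ i, g (k i)) h ih
          (fun m => hg m) (fun x => Finset.prod_nonneg fun i _ => hg _)
      have := ((Fin.consEquiv (fun _ : Fin (n+1) => ℤ)).symm.summable_iff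
        (f := fun x : ℤ × (Fin n → ℤ) => g x.1 * ∏ i, g (x.2 i))).mpr hmul
      refine this.congr fun k => ?_
      simp only [Function.comp, Fin.consEquiv_symm_apply]
      rw [Fin.prod_univ_succ]
      rfl

lemma aux_norm_lower {d : ℕ} {k : Fin d → ℤ} (hk : k ≠ 0) : (1:ℝ) ≤ ‖k‖ := by
  obtain ⟨i, hi⟩ : ∃ i, k i ≠ 0 := by
    by_contra h
    push_neg at h
    exact hk (funext h)
  calc (1:ℝ) ≤ ‖k i‖ := by
        rw [Int.norm_eq_abs]
        exact_mod_cast Int.one_le_abs hi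
  _ ≤ ‖k‖ := norm_le_pi_norm k i

lemma aux_lattice_summable {d : ℕ} (hd : 0 < d) {s : ℝ} (hs : (d:ℝ) < s) :
    Summable (fun k : {k : Fin d → ℤ // k ≠ 0} => ‖k.1‖ ^ (-s)) := by
  have hd' : (0:ℝ) < d := by exact_mod_cast hd
  have hp : 1 < s / d := (one_lt_div hd').mpr hs
  set g : ℤ → ℝ := fun m => (max 1 |(m:ℝ)|) ^ (-(s/d)) with hgdef
  have hg0 : ∀ m, 0 ≤ g m := fun m =>
    Real.rpow_nonneg (le_trans zero_le_one (le_max_left _ _)) _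
  have hG : Summable (fun k : Fin d → ℤ => ∏ i, g (k i)) :=
    aux_prod_summable d g hg0 (aux_g_summable hp)
  have hGs : Summable (fun k : {k : Fin d → ℤ // k ≠ 0} => ∏ i, g (k.1 i)) :=
    hG.comp_injective Subtype.coe_injective
  refine Summable.of_nonneg_of_le (fun k => Real.rpow_nonneg (norm_nonneg _) _)
    (fun k => ?_) hGs
  obtain ⟨k, hk⟩ := k
  have hk1 : (1:ℝ) ≤ ‖k‖ := aux_norm_lower hk
  have habs : ∀ i, max 1 |(k i : ℝ)| ≤ ‖k‖ := fun i => by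
    refine max_le hk1 ?_
    rw [← Int.norm_eq_abs]
    exact norm_le_pi_norm k i
  have hprodpos : (0:ℝ) < ∏ i, max 1 |(k i : ℝ)| :=
    Finset.prod_pos fun i _ => lt_of_lt_of_le zero_lt_one (le_max_left _ _)
  have hprodle : ∏ i, max 1 |(k i : ℝ)| ≤ ‖k‖ ^ d := by
    calc ∏ i, max 1 |(k i : ℝ)| ≤ ∏ _i : Fin d, ‖k‖ :=
          Finset.prod_le_prod (fun i _ => le_trans zero_le_one (le_max_left _ _))
            (fun i _ => habs i)
    _ = ‖k‖ ^ d := by rw [Finset.prod_const, Finset.card_univ, Fintype.card_fin]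
  have key : ‖k‖ ^ (-s) ≤ (∏ i, max 1 |(k i : ℝ)|) ^ (-(s/d)) := by
    have h1 : ‖k‖ ^ (-s) = (‖k‖ ^ (d:ℕ)) ^ (-(s/d)) := by
      rw [← Real.rpow_natCast ‖k‖ d, ← Real.rpow_mul (norm_nonneg _)]
      congr 1
      field_simp
    rw [h1]
    exact Real.rpow_le_rpow_of_nonpos hprodpos hprodle
      (neg_nonpos.mpr (le_of_lt (lt_trans zero_lt_one hp)))
  calc ‖k‖ ^ (-s) ≤ (∏ i, max 1 |(k i : ℝ)|) ^ (-(s/d)) := key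
  _ = ∏ i, g (k i) := by
      rw [← Real.finset_prod_rpow _ _ (fun i _ => le_trans zero_le_one (le_max_left _ _))]

lemma aux_det {d : ℕ} (j : Fin d) (v : Fin d → ℝ) :
    ((1 : Matrix (Fin d) (Fin d) ℝ).updateRow j v).det = v j := by
  have hv : v = ∑ l, v l • (1 : Matrix (Fin d) (Fin d) ℝ) l := by
    funext i
    simp [Matrix.one_apply]
  nth_rewrite 1 [hv]
  rw [Matrix.det_updateRow_sum]
  simp

lemma aux_slab_vol {d : ℕ} (j : Fin d) (k : Fin d → ℤ) (hkj : k j ≠ 0)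
    (ε R : ℝ) (hε : 0 ≤ ε) (hR : 0 ≤ R) (c : Fin d → ℝ) :
    volume {y : Fin d → ℝ |
        |∑ l, (k l : ℝ) * y l| ≤ ε ∧ ∀ i, i ≠ j → |y i - c i| ≤ R} ≤
      ENNReal.ofReal (|(k j : ℝ)|⁻¹ * (2 * ε * (2*R)^(d-1))) := by
  set M : Matrix (Fin d) (Fin d) ℝ :=
    (1 : Matrix (Fin d) (Fin d) ℝ).updateRow j (fun l => (k l : ℝ)) with hM
  set T : (Fin d → ℝ) →ₗ[ℝ] (Fin d → ℝ) := Matrix.toLin' M with hT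
  have hdet : LinearMap.det T = (k j : ℝ) := by
    rw [hT, LinearMap.det_toLin', hM, aux_det]
  have hdet0 : LinearMap.det T ≠ 0 := by
    rw [hdet]
    exact_mod_cast hkj
  set box : Set (Fin d → ℝ) := Set.pi Set.univ
    (fun i => if i = j then Set.Icc (-ε) ε else Set.Icc (c i - R) (c i + R)) with hbox
  have hsub : {y : Fin d → ℝ |
      |∑ l, (k l : ℝ) * y l| ≤ ε ∧ ∀ i, i ≠ j → |y i - c i| ≤ R} ⊆ T ⁻¹' box := by
    intro y hy
    obtain ⟨hy1, hy2⟩ := hy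
    intro i _
    by_cases hij : i = j
    · subst hij
      simp only [if_pos rfl]
      have : T y i = ∑ l, (k l : ℝ) * y l := by
        simp [hT, hM, Matrix.toLin'_apply, Matrix.mulVec, dotProduct,
          Matrix.updateRow_self]
      rw [this]
      exact abs_le.mp hy1
    · simp only [if_neg hij]
      have : T y i = y i := by
        simp [hT, hM, Matrix.toLin'_apply, Matrix.mulVec, dotProduct,
          Matrix.updateRow_ne hij, Matrix.one_apply, Finset.sum_ite_eq]
      rw [this]
      have := abs_le.mp (hy2 i hij)
      constructor <;> linarith [this.1, this.2]
  have hboxvol : volume box = ENNReal.ofReal (2*ε) * ENNReal.ofReal (2*R) ^ (d-1) := by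
    rw [hbox, volume_pi_pi]
    rw [← Finset.mul_prod_erase Finset.univ _ (Finset.mem_univ j)]
    rw [if_pos rfl, Real.volume_Icc]
    congr 1
    · congr 1; ring
    · rw [Finset.prod_congr rfl (fun i hi => ?_), Finset.prod_const,
        Finset.card_erase_of_mem (Finset.mem_univ j), Finset.card_univ, Fintype.card_fin]
      rw [if_neg (Finset.ne_of_mem_erase hi), Real.volume_Icc]
      congr 1; ring
  calc volume {y : Fin d → ℝ |
        |∑ l, (k l : ℝ) * y l| ≤ ε ∧ ∀ i, i ≠ j → |y i - c i| ≤ R}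
      ≤ volume (T ⁻¹' box) := measure_mono hsub
  _ = ENNReal.ofReal |(LinearMap.det T)⁻¹| * volume box :=
      Measure.addHaar_preimage_linearMap volume hdet0 box
  _ = ENNReal.ofReal (|(k j : ℝ)|⁻¹ * (2 * ε * (2*R)^(d-1))) := by
      rw [hboxvol, hdet, abs_inv,
        ENNReal.ofReal_mul (inv_nonneg.mpr (abs_nonneg _)),
        ENNReal.ofReal_mul (by linarith : (0:ℝ) ≤ 2*ε),
        ENNReal.ofReal_pow (by linarith : (0:ℝ) ≤ 2*R)]

lemma aux_perk {d : ℕ} (hd : 0 < d) {C : ℝ} (hC : 0 < C) (Pa : Set (Fin d → ℝ))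
    (ω : (Fin d → ℝ) → (Fin d → ℝ))
    (hlip : ∀ ξ ∈ Pa, ∀ ξ' ∈ Pa, ‖ω ξ - ω ξ'‖ ≤ C * ‖ξ - ξ'‖)
    (hanti : ∀ ξ ∈ Pa, ∀ ξ' ∈ Pa, ‖ξ - ξ'‖ ≤ C * ‖ω ξ - ω ξ'‖)
    (ξ0 : Fin d → ℝ) (hξ0 : ξ0 ∈ Pa) (r : ℝ) (hr : 0 ≤ r)
    (hPar : ∀ ξ ∈ Pa, ‖ξ - ξ0‖ ≤ r)
    (k : Fin d → ℤ) (hk : k ≠ 0) (ε : ℝ) (hε : 0 ≤ ε) :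
    volume {ξ ∈ Pa | |∑ l, (k l : ℝ) * ω ξ l| ≤ ε} ≤
      ENNReal.ofReal (C^d * (‖k‖⁻¹ * (2 * ε * (2*(C*r))^(d-1)))) := by
  classical
  -- pick maximizing coordinate
  have : Nonempty (Fin d) := ⟨⟨0, hd⟩⟩
  obtain ⟨j, -, hj⟩ := Finset.exists_max_image Finset.univ (fun i => |k i|) Finset.univ_nonempty
  have hkj : k j ≠ 0 := by
    intro h0
    apply hk
    funext i
    have h1 := hj i (Finset.mem_univ i)
    rw [h0, abs_zero] at h1
    simpa using abs_eq_zero.mp (le_antisymm h1 (abs_nonneg _))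
  have hnorm : ‖k‖ = |(k j : ℝ)| := by
    apply le_antisymm
    · rw [pi_norm_le_iff_of_nonneg (abs_nonneg _)]
      intro i
      rw [Int.norm_eq_abs]
      have := hj i (Finset.mem_univ i)
      exact_mod_cast this
    · rw [← Int.norm_eq_abs]
      exact norm_le_pi_norm k j
  -- inverse function
  set h : (Fin d → ℝ) → (Fin d → ℝ) := Function.invFunOn ω Pa with hh
  have hinv : ∀ ξ ∈ Pa, h (ω ξ) = ξ := by
    intro ξ hξ
    have hex : ∃ a ∈ Pa, ω a = ω ξ := ⟨ξ, hξ, rfl⟩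
    have h1 : h (ω ξ) ∈ Pa := Function.invFunOn_mem hex
    have h2 : ω (h (ω ξ)) = ω ξ := Function.invFunOn_eq hex
    have := hanti _ h1 _ hξ
    rw [h2, sub_self, norm_zero, mul_zero] at this
    have := le_antisymm this (norm_nonneg _)
    rwa [norm_sub_eq_zero_iff] at this
  have hL : LipschitzOnWith C.toNNReal h (ω '' Pa) := by
    apply LipschitzOnWith.of_dist_le_mul
    rintro x ⟨ξ, hξ, rfl⟩ y ⟨ξ', hξ', rfl⟩
    rw [hinv _ hξ, hinv _ hξ', Real.coe_toNNReal _ hC.le, dist_eq_norm, dist_eq_norm]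
    exact hanti _ hξ _ hξ'
  set S' : Set (Fin d → ℝ) := (ω '' Pa) ∩ {y | |∑ l, (k l : ℝ) * y l| ≤ ε} with hS'
  have hBsub : {ξ ∈ Pa | |∑ l, (k l : ℝ) * ω ξ l| ≤ ε} ⊆ h '' S' := by
    rintro ξ ⟨hξ, hξ2⟩
    exact ⟨ω ξ, ⟨⟨ξ, hξ, rfl⟩, hξ2⟩, hinv _ hξ⟩
  have hS'sub : S' ⊆ {y : Fin d → ℝ |
      |∑ l, (k l : ℝ) * y l| ≤ ε ∧ ∀ i, i ≠ j → |y i - ω ξ0 i| ≤ C * r} := by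
    rintro y ⟨⟨ξ, hξ, rfl⟩, hy⟩
    refine ⟨hy, fun i _ => ?_⟩
    have h1 : |(ω ξ - ω ξ0) i| ≤ ‖ω ξ - ω ξ0‖ := by
      rw [← Real.norm_eq_abs]
      exact norm_le_pi_norm _ i
    have h2 : ‖ω ξ - ω ξ0‖ ≤ C * r := by
      calc ‖ω ξ - ω ξ0‖ ≤ C * ‖ξ - ξ0‖ := hlip _ hξ _ hξ0
      _ ≤ C * r := by
          exact mul_le_mul_of_nonneg_left (hPar _ hξ) hC.le
    rw [Pi.sub_apply] at h1
    linarith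
  -- Hausdorff measure argument
  have hcard : (Fintype.card (Fin d) : ℝ) = (d : ℝ) := by simp
  have hvol : ∀ s : Set (Fin d → ℝ), volume s = μH[(d:ℝ)] s := by
    intro s
    rw [← hausdorffMeasure_pi_real (ι := Fin d), Fintype.card_fin]
  calc volume {ξ ∈ Pa | |∑ l, (k l : ℝ) * ω ξ l| ≤ ε}
      ≤ volume (h '' S') := measure_mono hBsub
  _ = μH[(d:ℝ)] (h '' S') := hvol _
  _ ≤ (C.toNNReal : ℝ≥0∞) ^ (d:ℝ) * μH[(d:ℝ)] S' :=
      (hL.mono Set.inter_subset_left).hausdorffMeasure_image_le (by positivity)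
  _ = (C.toNNReal : ℝ≥0∞) ^ (d:ℝ) * volume S' := by rw [hvol]
  _ ≤ (C.toNNReal : ℝ≥0∞) ^ (d:ℝ) *
        ENNReal.ofReal (|(k j : ℝ)|⁻¹ * (2 * ε * (2*(C*r))^(d-1))) := by
      gcongr
      calc volume S' ≤ volume {y : Fin d → ℝ |
            |∑ l, (k l : ℝ) * y l| ≤ ε ∧ ∀ i, i ≠ j → |y i - ω ξ0 i| ≤ C * r} :=
          measure_mono hS'sub
      _ ≤ _ := aux_slab_vol j k hkj ε (C*r) hε (by positivity) (ω ξ0)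
  _ = ENNReal.ofReal (C^d * (‖k‖⁻¹ * (2 * ε * (2*(C*r))^(d-1)))) := by
      rw [hnorm]
      have h1 : (C.toNNReal : ℝ≥0∞) = ENNReal.ofReal C := rfl
      rw [h1, ENNReal.ofReal_rpow_of_pos hC, ← ENNReal.ofReal_mul (by positivity),
        Real.rpow_natCast]

/-- Full Diophantine exclusion estimate: for `τ > d`, the set of parameters `ξ ∈ Pa`
for which the Diophantine condition `|⟨k, ω(ξ)⟩| > γ|k|^{−τ}` fails for some
nonzero `k ∈ ℤ^d` has Lebesgue measure at most `C'' γ`, with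
`C'' = C''(C, d, τ, diam Pa)`. -/
theorem stmt7 (d : ℕ) (C τ : ℝ) (hC : 0 < C) (hτ : (d : ℝ) < τ)
    (Pa : Set (Fin d → ℝ)) (hPao : IsOpen Pa) (hPab : Bornology.IsBounded Pa)
    (ω : (Fin d → ℝ) → (Fin d → ℝ))
    (hlip : ∀ ξ ∈ Pa, ∀ ξ' ∈ Pa, ‖ω ξ - ω ξ'‖ ≤ C * ‖ξ - ξ'‖)
    (hanti : ∀ ξ ∈ Pa, ∀ ξ' ∈ Pa, ‖ξ - ξ'‖ ≤ C * ‖ω ξ - ω ξ'‖) :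
    ∃ C'' : ℝ, 0 ≤ C'' ∧ ∀ γ : ℝ, 0 < γ →
      MeasureTheory.volume
          {ξ ∈ Pa | ∃ k : Fin d → ℤ, k ≠ 0 ∧
            |∑ j, (k j : ℝ) * ω ξ j| ≤ γ * ‖k‖ ^ (-τ)} ≤
        ENNReal.ofReal (C'' * γ) := by
  classical
  rcases Nat.eq_zero_or_pos d with hd0 | hd
  · refine ⟨0, le_refl 0, fun γ hγ => ?_⟩
    subst hd0
    have hempty : {ξ ∈ Pa | ∃ k : Fin 0 → ℤ, k ≠ 0 ∧
        |∑ j, (k j : ℝ) * ω ξ j| ≤ γ * ‖k‖ ^ (-τ)} = ∅ := by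
      ext ξ
      simp only [Set.mem_setOf_eq, Set.mem_empty_iff_false, iff_false, not_and, not_exists]
      intro _ k hk
      exact absurd (funext fun i => i.elim0) hk
    rw [hempty, measure_empty]
    exact zero_le
  rcases Pa.eq_empty_or_nonempty with hPe | ⟨ξ0, hξ0⟩
  · refine ⟨0, le_refl 0, fun γ hγ => ?_⟩
    have : volume {ξ ∈ Pa | ∃ k : Fin d → ℤ, k ≠ 0 ∧
        |∑ j, (k j : ℝ) * ω ξ j| ≤ γ * ‖k‖ ^ (-τ)} = 0 := by
      apply measure_mono_null (Set.sep_subset _ _)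
      rw [hPe]
      exact measure_empty
    rw [this]
    exact zero_le
  obtain ⟨r, hrsub⟩ := hPab.subset_closedBall ξ0
  have hr0 : 0 ≤ r := by
    have := hrsub hξ0
    rw [Metric.mem_closedBall, dist_self] at this
    exact this
  have hPar : ∀ ξ ∈ Pa, ‖ξ - ξ0‖ ≤ r := fun ξ hξ => by
    have := hrsub hξ
    rwa [Metric.mem_closedBall, dist_eq_norm] at this
  set A : ℝ := C^d * 2 * (2*(C*r))^(d-1) with hA
  have hA0 : 0 ≤ A := by positivity
  have hsum : Summable (fun k : {k : Fin d → ℤ // k ≠ 0} => ‖k.1‖ ^ (-(τ+1))) :=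
    aux_lattice_summable hd (by linarith)
  set S0 : ℝ := ∑' (k : {k : Fin d → ℤ // k ≠ 0}), ‖k.1‖ ^ (-(τ+1)) with hS0
  have hS00 : 0 ≤ S0 := tsum_nonneg fun k => Real.rpow_nonneg (norm_nonneg _) _
  refine ⟨A * S0, mul_nonneg hA0 hS00, fun γ hγ => ?_⟩
  have hcover : {ξ ∈ Pa | ∃ k : Fin d → ℤ, k ≠ 0 ∧
      |∑ j, (k j : ℝ) * ω ξ j| ≤ γ * ‖k‖ ^ (-τ)} ⊆
      ⋃ (k : {k : Fin d → ℤ // k ≠ 0}),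
        {ξ ∈ Pa | |∑ l, (k.1 l : ℝ) * ω ξ l| ≤ γ * ‖k.1‖ ^ (-τ)} := by
    rintro ξ ⟨hξ, k, hk, hle⟩
    exact Set.mem_iUnion.mpr ⟨⟨k, hk⟩, hξ, hle⟩
  have hbound : ∀ k : {k : Fin d → ℤ // k ≠ 0},
      volume {ξ ∈ Pa | |∑ l, (k.1 l : ℝ) * ω ξ l| ≤ γ * ‖k.1‖ ^ (-τ)} ≤
        ENNReal.ofReal (A * γ * ‖k.1‖ ^ (-(τ+1))) := by
    rintro ⟨k, hk⟩
    have hkpos : (0:ℝ) < ‖k‖ := lt_of_lt_of_le zero_lt_one (aux_norm_lower hk)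
    have hε0 : 0 ≤ γ * ‖k‖ ^ (-τ) := by positivity
    have hmain := aux_perk hd hC Pa ω hlip hanti ξ0 hξ0 r hr0 hPar k hk
      (γ * ‖k‖ ^ (-τ)) hε0
    refine hmain.trans (le_of_eq ?_)
    congr 1
    have hkey : ‖k‖⁻¹ * ‖k‖ ^ (-τ) = ‖k‖ ^ (-(τ+1)) := by
      rw [← Real.rpow_neg_one ‖k‖, ← Real.rpow_add hkpos]
      congr 1
      ring
    calc C^d * (‖k‖⁻¹ * (2 * (γ * ‖k‖ ^ (-τ)) * (2*(C*r))^(d-1)))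
        = A * γ * (‖k‖⁻¹ * ‖k‖ ^ (-τ)) := by rw [hA]; ring
    _ = A * γ * ‖k‖ ^ (-(τ+1)) := by rw [hkey]
  calc volume {ξ ∈ Pa | ∃ k : Fin d → ℤ, k ≠ 0 ∧
        |∑ j, (k j : ℝ) * ω ξ j| ≤ γ * ‖k‖ ^ (-τ)}
      ≤ volume (⋃ (k : {k : Fin d → ℤ // k ≠ 0}),
        {ξ ∈ Pa | |∑ l, (k.1 l : ℝ) * ω ξ l| ≤ γ * ‖k.1‖ ^ (-τ)}) := measure_mono hcover
  _ ≤ ∑' (k : {k : Fin d → ℤ // k ≠ 0}),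
        volume {ξ ∈ Pa | |∑ l, (k.1 l : ℝ) * ω ξ l| ≤ γ * ‖k.1‖ ^ (-τ)} :=
      measure_iUnion_le _
  _ ≤ ∑' (k : {k : Fin d → ℤ // k ≠ 0}),
        ENNReal.ofReal (A * γ * ‖k.1‖ ^ (-(τ+1))) := ENNReal.tsum_le_tsum hbound
  _ = ENNReal.ofReal (∑' (k : {k : Fin d → ℤ // k ≠ 0}), A * γ * ‖k.1‖ ^ (-(τ+1))) :=
      (ENNReal.ofReal_tsum_of_nonneg
        (fun k => by positivity) (hsum.mul_left (A * γ))).symm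
  _ = ENNReal.ofReal (A * S0 * γ) := by
      rw [tsum_mul_left, hS0]
      congr 1
      ring
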